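/- Let τ be a nowhere-vanishing function on a multidimensional lattice with commuting shifts T_p, T_q, T_r (associated to distinct parameters p,q,r ∈ ℂ) satisfying the Hirota bilinear equation (p−q)(T_pT_qτ)(T_rτ) + (q−r)(T_qT_rτ)(T_pτ) + (r−p)(T_rT_pτ)(T_qτ) = 0 for all triples of directions. Define S_{a,b} = (T_a⁻¹T_b τ)/τ for distinct parameters a,b among the lattice directions. Then for p distinct from a and b: (p−b)·T_p S_{a,b} − (p−a)·S_{a,b} = (a−b)·S_{a,p}·T_p S_{p,b}. -/

import Mathlib

/-- the discrete relation for `S_{a,b} = (T_a⁻¹ T_b τ)/τ` follows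
from the Hirota bilinear KP equation. -/
theorem hirota_implies_discrete_S_relation
    {ι : Type*} [DecidableEq ι]
    (τ : (ι → ℤ) → ℂ)
    (par : ι → ℂ) (hpar : Function.Injective par)
    (hτ : ∀ n, τ n ≠ 0)
    (hHirota : ∀ p q r : ι, p ≠ q → p ≠ r → q ≠ r → ∀ n : ι → ℤ,
      (par p - par q) * τ (n + Pi.single p 1 + Pi.single q 1) * τ (n + Pi.single r 1)
        + (par q - par r) * τ (n + Pi.single q 1 + Pi.single r 1) * τ (n + Pi.single p 1)
        + (par r - par p) * τ (n + Pi.single r 1 + Pi.single p 1) * τ (n + Pi.single q 1)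
        = 0)
    (S : ι → ι → (ι → ℤ) → ℂ)
    (hS : ∀ a b : ι, ∀ n : ι → ℤ,
      S a b n = τ (n - Pi.single a 1 + Pi.single b 1) / τ n)
    (a b p : ι) (hab : a ≠ b) (hap : a ≠ p) (hbp : b ≠ p) :
    ∀ n : ι → ℤ,
      (par p - par b) * S a b (n + Pi.single p 1) - (par p - par a) * S a b n
        = (par a - par b) * S a p n * S p b (n + Pi.single p 1) := by
  intro n
  have h := hHirota p b a hbp.symm hap.symm hab.symm (n - Pi.single a 1)
  rw [show (n - Pi.single a 1 + Pi.single p 1 + Pi.single b 1)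
      = (n + Pi.single p 1 - Pi.single a 1 + Pi.single b 1) by abel,
    show (n - Pi.single a 1 + Pi.single b 1 + Pi.single a 1) = (n + Pi.single b 1) by abel,
    show (n - Pi.single a 1 + Pi.single a 1 + Pi.single p 1) = (n + Pi.single p 1) by abel,
    show (n - Pi.single a 1 + Pi.single a 1) = n by abel] at h
  rw [hS, hS, hS, hS,
    show (n + Pi.single p 1 - Pi.single p 1 + Pi.single b 1) = n + Pi.single b 1 by abel]
  have h1 := hτ n
  have h2 := hτ (n + Pi.single p 1)
  field_simp
  linear_combination h
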